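/- Let c > a and b > d (anti-coordination game). Let φ : ℝ → ℝ be continuously differentiable with φ(x) > 0 for all x ∈ (0,1] and such that there exist constants h > 0 and k > 0 with φ(x)/x^h → k as x → 0⁺. Then every solution (x, g) of the conformity-gain controlled replicator equation with x(0) ∈ [0,1) and g(0) > 0 satisfies x(t) → 0 as t → ∞ and g(t) → ḡ as t → ∞ for some constant ḡ > 0. -/

import Mathlib

/-- `(x, g)` is a solution of the conformity-gain controlled replicator equation
(control matrix `G⁽⁴⁾`): `ẋ = x(1−x)((a+d−b−c)x + b − d − g(1−x))`, `ġ = φ(x) g`. -/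
def IsConformitySolution (a b c d : ℝ) (φ : ℝ → ℝ) (x g : ℝ → ℝ) : Prop :=
  ∀ t : ℝ, 0 ≤ t →
    HasDerivAt x
      (x t * (1 - x t) * ((a + d - b - c) * x t + (b - d) - g t * (1 - x t))) t ∧
    HasDerivAt g (φ (x t) * g t) t

open Set Filter intervalIntegral Real
set_option maxHeartbeats 1000000

/-- Solutions of linear ODEs `f' = q f` on `[0,∞)` have exponential form. -/
lemma ode_exp (f q : ℝ → ℝ) (hq : Continuous q)
    (hf : ∀ t : ℝ, 0 ≤ t → HasDerivAt f (q t * f t) t) :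
    ∀ t : ℝ, 0 ≤ t → f t = f 0 * Real.exp (∫ s in (0:ℝ)..t, q s) := by
  set Q : ℝ → ℝ := fun t => ∫ s in (0:ℝ)..t, q s with hQdef
  have hQ : ∀ t : ℝ, HasDerivAt Q (q t) t := fun t =>
    intervalIntegral.integral_hasDerivAt_right (hq.intervalIntegrable _ _)
      (hq.stronglyMeasurableAtFilter _ _) hq.continuousAt
  set F : ℝ → ℝ := fun t => f t * Real.exp (-Q t) with hFdef
  have hF : ∀ t : ℝ, 0 ≤ t → HasDerivAt F 0 t := by
    intro t ht
    have h1 : HasDerivAt (fun s => f s * Real.exp (-Q s))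
      (q t * f t * Real.exp (-Q t) + f t * (Real.exp (-Q t) * -q t)) t := (hf t ht).mul (((hQ t).neg).exp)
    convert h1 using 1
    ring
  intro t ht
  have key : F t = F 0 := by
    have hcont : ContinuousOn F (Icc 0 t) := fun s hs =>
      ((hF s hs.1).continuousAt).continuousWithinAt
    exact constant_of_has_deriv_right_zero hcont
      (fun s hs => (hF s hs.1).hasDerivWithinAt) t ⟨ht, le_refl t⟩
  have hQ0 : Q 0 = 0 := intervalIntegral.integral_same
  have hF0 : F 0 = f 0 := by simp [hFdef, hQ0]
  have h2 : f t * Real.exp (-Q t) = f 0 := by rw [← hF0]; exact key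
  rw [← h2, mul_assoc, ← Real.exp_add]
  simp [hQdef]

/-- the FTC derivative fact, packaged -/
lemma integ_deriv (q : ℝ → ℝ) (hq : Continuous q) (t : ℝ) :
    HasDerivAt (fun u => ∫ s in (0:ℝ)..u, q s) (q t) t :=
  intervalIntegral.integral_hasDerivAt_right (hq.intervalIntegrable _ _)
    (hq.stronglyMeasurableAtFilter _ _) hq.continuousAt


/-- Consensus stabilization via the conformity-gain controller in an anti-coordination
game (`c > a`, `b > d`). -/
theorem consensus_stabilization_anticoordination (a b c d : ℝ) (hca : c > a) (hbd : b > d)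
    (φ : ℝ → ℝ) (hφ : ContDiff ℝ 1 φ)
    (h1 : ∀ y : ℝ, 0 < y → y ≤ 1 → 0 < φ y)
    (h2 : ∃ h k : ℝ, 0 < h ∧ 0 < k ∧
      Filter.Tendsto (fun y : ℝ => φ y / y ^ h) (nhdsWithin 0 (Set.Ioi 0)) (nhds k))
    (x g : ℝ → ℝ) (hsol : IsConformitySolution a b c d φ x g)
    (hx0 : x 0 ∈ Set.Ico (0 : ℝ) 1) (hg0 : 0 < g 0) :
    Filter.Tendsto x Filter.atTop (nhds 0) ∧
    ∃ gbar : ℝ, 0 < gbar ∧ Filter.Tendsto g Filter.atTop (nhds gbar) := by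
  obtain ⟨hx00, hx01⟩ := hx0
  obtain ⟨h, k, hh, hk, hlim⟩ := h2
  have hφc : Continuous φ := hφ.continuous
  -- φ 0 = 0
  have hφ0 : φ 0 = 0 := by
    have l1 : Tendsto φ (nhdsWithin 0 (Set.Ioi 0)) (nhds (φ 0)) :=
      (hφc.tendsto 0).mono_left nhdsWithin_le_nhds
    have l2 : Tendsto (fun y : ℝ => φ y / y ^ h * y ^ h) (nhdsWithin 0 (Set.Ioi 0))
        (nhds (k * 0)) := by
      apply hlim.mul
      have : ContinuousAt (fun y : ℝ => y ^ h) 0 :=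
        Real.continuousAt_rpow_const 0 h (Or.inr (le_of_lt hh))
      have := this.tendsto.mono_left (nhdsWithin_le_nhds (s := Set.Ioi (0:ℝ)))
      simpa [Real.zero_rpow (ne_of_gt hh)] using this
    have l3 : Tendsto φ (nhdsWithin 0 (Set.Ioi 0)) (nhds (k * 0)) := by
      apply l2.congr'
      filter_upwards [self_mem_nhdsWithin] with y hy
      have : (y : ℝ) ^ h ≠ 0 := ne_of_gt (Real.rpow_pos_of_pos hy h)
      field_simp
    have := tendsto_nhds_unique l1 l3
    simpa using this
  -- continuous extensions
  have hxc : ∀ t : ℝ, 0 ≤ t → ContinuousAt x t := fun t ht => (hsol t ht).1.continuousAt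
  have hgc : ∀ t : ℝ, 0 ≤ t → ContinuousAt g t := fun t ht => (hsol t ht).2.continuousAt
  set xe : ℝ → ℝ := fun t => x (max t 0) with hxe_def
  set ge : ℝ → ℝ := fun t => g (max t 0) with hge_def
  have hmaxc : Continuous (fun t : ℝ => max t 0) := continuous_id.max continuous_const
  have hxec : Continuous xe := continuous_iff_continuousAt.mpr fun t =>
    ContinuousAt.comp (hxc _ (le_max_right t 0)) (Continuous.continuousAt (x := t) hmaxc)
  have hgec : Continuous ge := continuous_iff_continuousAt.mpr fun t =>
    ContinuousAt.comp (hgc _ (le_max_right t 0)) (Continuous.continuousAt (x := t) hmaxc)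
  have hxe_eq : ∀ t : ℝ, 0 ≤ t → xe t = x t := fun t ht => by
    simp [hxe_def, max_eq_left ht]
  have hge_eq : ∀ t : ℝ, 0 ≤ t → ge t = g t := fun t ht => by
    simp [hge_def, max_eq_left ht]
  set ψe : ℝ → ℝ := fun t => (a + d - b - c) * xe t + (b - d) - ge t * (1 - xe t) with hψe_def
  have hψec : Continuous ψe := by fun_prop
  set qx : ℝ → ℝ := fun t => (1 - xe t) * ψe t with hqx_def
  set qy : ℝ → ℝ := fun t => -(xe t * ψe t) with hqy_def
  set q1 : ℝ → ℝ := fun t => φ (xe t) with hq1_def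
  have hqxc : Continuous qx := by fun_prop
  have hqyc : Continuous qy := by fun_prop
  have hq1c : Continuous q1 := hφc.comp hxec
  -- exponential representations
  have hx_exp : ∀ t : ℝ, 0 ≤ t → x t = x 0 * Real.exp (∫ s in (0:ℝ)..t, qx s) := by
    apply ode_exp x qx hqxc
    intro t ht
    have := (hsol t ht).1
    have hx : xe t = x t := hxe_eq t ht
    have hg : ge t = g t := hge_eq t ht
    convert this using 1
    simp only [hqx_def, hψe_def, hx, hg]
    ring
  have hy_exp : ∀ t : ℝ, 0 ≤ t → 1 - x t = (1 - x 0) * Real.exp (∫ s in (0:ℝ)..t, qy s) := by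
    have := ode_exp (fun t => 1 - x t) qy hqyc ?_
    · simpa using this
    intro t ht
    have h1 : HasDerivAt (fun s => 1 - x s) _ t := (hasDerivAt_const t (1:ℝ)).sub (hsol t ht).1
    convert h1 using 1
    simp only [hqy_def, hψe_def, hxe_eq t ht, hge_eq t ht]
    ring
  set I : ℝ → ℝ := fun t => ∫ s in (0:ℝ)..t, q1 s with hI_def
  have hg_exp : ∀ t : ℝ, 0 ≤ t → g t = g 0 * Real.exp (I t) := by
    apply ode_exp g q1 hq1c
    intro t ht
    have := (hsol t ht).2
    simpa [hq1_def, hxe_eq t ht] using this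
  have hI_deriv : ∀ t, HasDerivAt I (q1 t) t := integ_deriv q1 hq1c
  have hI0 : I 0 = 0 := intervalIntegral.integral_same
  rcases eq_or_lt_of_le hx00 with hx0z | hx0p
  · -- x 0 = 0 : x ≡ 0, g constant
    have hxz : ∀ t : ℝ, 0 ≤ t → x t = 0 := fun t ht => by
      rw [hx_exp t ht, ← hx0z]; ring
    have hq1z : ∀ s : ℝ, q1 s = 0 := fun s => by
      simp [hq1_def, hxe_def, hxz _ (le_max_right s 0), hφ0]
    have hIz : ∀ t : ℝ, I t = 0 := fun t => by
      simp [hI_def, hq1z]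
    constructor
    · apply tendsto_const_nhds.congr'
      filter_upwards [eventually_ge_atTop (0:ℝ)] with t ht
      exact (hxz t ht).symm
    · refine ⟨g 0, hg0, ?_⟩
      apply tendsto_const_nhds.congr'
      filter_upwards [eventually_ge_atTop (0:ℝ)] with t ht
      rw [hg_exp t ht, hIz t]
      simp
  -- main case : 0 < x 0
  have hxpos : ∀ t : ℝ, 0 ≤ t → 0 < x t := fun t ht => by
    rw [hx_exp t ht]; positivity
  have hxlt1 : ∀ t : ℝ, 0 ≤ t → x t < 1 := fun t ht => by
    have h1x : (0:ℝ) < 1 - x 0 := by linarith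
    have := hy_exp t ht
    nlinarith [Real.exp_pos (∫ s in (0:ℝ)..t, qy s)]
  have hxe_pos : ∀ t : ℝ, 0 < xe t := fun t => hxpos _ (le_max_right t 0)
  have hxe_lt1 : ∀ t : ℝ, xe t < 1 := fun t => hxlt1 _ (le_max_right t 0)
  have hq1_nonneg : ∀ t : ℝ, 0 ≤ q1 t := fun t =>
    le_of_lt (h1 _ (hxe_pos t) (le_of_lt (hxe_lt1 t)))
  have hI_mono : Monotone I :=
    monotone_of_deriv_nonneg (fun t => (hI_deriv t).differentiableAt)
      (fun t => by rw [(hI_deriv t).deriv]; exact hq1_nonneg t)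
  -- the 2k bound near 0
  have hδ : ∃ δ : ℝ, 0 < δ ∧ ∀ y : ℝ, 0 < y → y < δ → φ y ≤ 2 * k * y ^ h := by
    have l := hlim.eventually_lt_const (show k < 2 * k by linarith)
    rw [eventually_nhdsWithin_iff, Metric.eventually_nhds_iff] at l
    obtain ⟨ε, hε, hl⟩ := l
    refine ⟨ε, hε, fun y hy hyδ => ?_⟩
    have hd : dist y 0 < ε := by
      rw [Real.dist_eq, sub_zero, abs_of_pos hy]; exact hyδ
    have := hl hd hy
    have hyh : (0:ℝ) < y ^ h := Real.rpow_pos_of_pos hy h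
    rw [div_lt_iff₀ hyh] at this
    linarith
  obtain ⟨δ, hδpos, hδbound⟩ := hδ
  -- I is bounded above
  have hIbdd : ∃ B : ℝ, ∀ t, I t ≤ B := by
    by_contra hub
    push_neg at hub
    set m : ℝ := min (c - a) 1 with hm_def
    have hm : 0 < m := lt_min (by linarith) one_pos
    obtain ⟨ts, hts⟩ := hub (Real.log ((b - d + 1) / g 0))
    set t₀ : ℝ := max ts 0 with ht₀_def
    have ht₀0 : (0:ℝ) ≤ t₀ := le_max_right _ _
    have hbd1 : (0:ℝ) < b - d + 1 := by linarith
    have hgt₀ : b - d + 1 ≤ g t₀ := by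
      have l1 : Real.log ((b - d + 1) / g 0) < I t₀ :=
        lt_of_lt_of_le hts (hI_mono (le_max_left _ _))
      have l3 : (b - d + 1) / g 0 ≤ Real.exp (I t₀) := by
        calc (b - d + 1) / g 0 = Real.exp (Real.log ((b - d + 1) / g 0)) :=
              (Real.exp_log (by positivity)).symm
          _ ≤ _ := Real.exp_le_exp.mpr l1.le
      rw [hg_exp t₀ ht₀0]
      rw [div_le_iff₀ hg0] at l3
      linarith
    have hg_ge : ∀ t, t₀ ≤ t → b - d + 1 ≤ g t := by
      intro t ht
      have h0t : 0 ≤ t := le_trans ht₀0 ht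
      have l1 := Real.exp_le_exp.mpr (hI_mono ht)
      rw [hg_exp t h0t]
      rw [hg_exp t₀ ht₀0] at hgt₀
      nlinarith
    have hψ_le : ∀ t, t₀ ≤ t → ψe t ≤ -m := by
      intro t ht
      have h0t : 0 ≤ t := le_trans ht₀0 ht
      have hx1 : x t < 1 := hxlt1 t h0t
      have hx0' : 0 < x t := hxpos t h0t
      have hg' : b - d + 1 ≤ g t := hg_ge t ht
      have hm1 : m ≤ c - a := min_le_left _ _
      have hm2 : m ≤ 1 := min_le_right _ _
      simp only [hψe_def, hxe_eq t h0t, hge_eq t h0t]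
      have f1 : (a - c) * x t ≤ -m * x t :=
        mul_le_mul_of_nonneg_right (by linarith) hx0'.le
      have f2 : (b - d - g t) * (1 - x t) ≤ -m * (1 - x t) :=
        mul_le_mul_of_nonneg_right (by linarith) (by linarith)
      nlinarith
    have hx_anti : AntitoneOn x (Ici t₀) := by
      apply antitoneOn_of_deriv_nonpos (convex_Ici t₀)
      · exact fun s hs => (hxc s (le_trans ht₀0 hs)).continuousWithinAt
      · intro s hs
        rw [interior_Ici] at hs
        exact (hsol s (le_trans ht₀0 hs.le)).1.differentiableAt.differentiableWithinAt
      · intro s hs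
        rw [interior_Ici] at hs
        have h0s : 0 ≤ s := le_trans ht₀0 hs.le
        rw [(hsol s h0s).1.deriv]
        have hψ : (a + d - b - c) * x s + (b - d) - g s * (1 - x s) = ψe s := by
          simp [hψe_def, hxe_eq s h0s, hge_eq s h0s]
        rw [hψ]
        have l1 := hψ_le s hs.le
        have l2 := hxpos s h0s
        have l3 := hxlt1 s h0s
        have l4 : 0 ≤ x s * (1 - x s) := by nlinarith
        have l5 : 0 ≤ -ψe s := by linarith
        nlinarith [mul_nonneg l4 l5]
    have hβ : 0 < 1 - x t₀ := by linarith [hxlt1 t₀ ht₀0]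
    set β : ℝ := 1 - x t₀ with hβ_def
    have hqx_le : ∀ s, t₀ ≤ s → qx s ≤ -(m * β) := by
      intro s hs
      have h0s : 0 ≤ s := le_trans ht₀0 hs
      have l1 : ψe s ≤ -m := hψ_le s hs
      have l2 : β ≤ 1 - x s := by
        have := hx_anti self_mem_Ici hs hs
        simp only [hβ_def]; linarith
      simp only [hqx_def, hxe_eq s h0s]
      nlinarith
    have hx_decay : ∀ t₁, t₀ ≤ t₁ → ∀ s, t₁ ≤ s →
        x s ≤ x t₁ * Real.exp (-(m * β) * (s - t₁)) := by
      intro t₁ ht₁ s hs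
      have h0t₁ : 0 ≤ t₁ := le_trans ht₀0 ht₁
      have h0s : 0 ≤ s := le_trans h0t₁ hs
      have hadd : (∫ u in (0:ℝ)..t₁, qx u) + (∫ u in t₁..s, qx u) = ∫ u in (0:ℝ)..s, qx u :=
        intervalIntegral.integral_add_adjacent_intervals (hqxc.intervalIntegrable _ _)
          (hqxc.intervalIntegrable _ _)
      have hxs : x s = x t₁ * Real.exp (∫ u in t₁..s, qx u) := by
        rw [hx_exp s h0s, hx_exp t₁ h0t₁, ← hadd, Real.exp_add]; ring
      rw [hxs]
      have hint : (∫ u in t₁..s, qx u) ≤ -(m * β) * (s - t₁) := by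
        have hmono := intervalIntegral.integral_mono_on hs (hqxc.intervalIntegrable _ _)
          (_root_.intervalIntegrable_const (μ := MeasureTheory.volume) (c := -(m * β)))
          (fun u hu => hqx_le u (le_trans ht₁ hu.1))
        rw [intervalIntegral.integral_const, smul_eq_mul] at hmono
        calc (∫ u in t₁..s, qx u) ≤ (s - t₁) * -(m * β) := hmono
          _ = -(m * β) * (s - t₁) := by ring
      have := Real.exp_le_exp.mpr hint
      nlinarith [hxpos t₁ h0t₁, Real.exp_pos (∫ u in t₁..s, qx u)]
    have htendexp : Tendsto (fun s : ℝ => x t₀ * Real.exp (-(m * β) * (s - t₀)))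
        atTop (nhds 0) := by
      rw [show (0:ℝ) = x t₀ * 0 by ring]
      apply Tendsto.const_mul
      apply Real.tendsto_exp_atBot.comp
      apply (tendsto_const_mul_atBot_of_neg (by nlinarith : -(m * β) < 0)).mpr
      exact tendsto_atTop_add_const_right _ _ tendsto_id
    obtain ⟨t₁, ht₁, hxt₁δ⟩ : ∃ t₁, t₀ ≤ t₁ ∧ x t₁ < δ := by
      obtain ⟨t₁, l1, l2⟩ := ((htendexp.eventually_lt_const hδpos).and
        (eventually_ge_atTop t₀)).exists
      exact ⟨t₁, l2, lt_of_le_of_lt (hx_decay t₀ le_rfl t₁ l2) l1⟩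
    have h0t₁ : 0 ≤ t₁ := le_trans ht₀0 ht₁
    set C : ℝ := 2 * k * x t₁ ^ h with hC_def
    have hxt₁pos : 0 < x t₁ := hxpos t₁ h0t₁
    have hCpos : 0 < C := by
      have := Real.rpow_pos_of_pos hxt₁pos h
      positivity
    set r : ℝ := m * β * h with hr_def
    have hrpos : 0 < r := by positivity
    have hq1_bound : ∀ s, t₁ ≤ s → q1 s ≤ C * Real.exp (-r * (s - t₁)) := by
      intro s hs
      have h0s : 0 ≤ s := le_trans h0t₁ hs
      have hxs_pos := hxpos s h0s
      have hxs_le : x s ≤ x t₁ * Real.exp (-(m * β) * (s - t₁)) := hx_decay t₁ ht₁ s hs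
      have hexp1 : Real.exp (-(m * β) * (s - t₁)) ≤ 1 :=
        Real.exp_le_one_iff.mpr (by nlinarith)
      have hxsδ : x s < δ := by nlinarith
      have hφle := hδbound (x s) hxs_pos hxsδ
      have hrle : x s ^ h ≤ (x t₁ * Real.exp (-(m * β) * (s - t₁))) ^ h :=
        Real.rpow_le_rpow hxs_pos.le hxs_le hh.le
      have heq : (x t₁ * Real.exp (-(m * β) * (s - t₁))) ^ h
          = x t₁ ^ h * Real.exp (-r * (s - t₁)) := by
        rw [Real.mul_rpow hxt₁pos.le (Real.exp_nonneg _),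
          ← Real.exp_mul]
        congr 1
        simp only [hr_def]
        ring
      have hq1s : q1 s = φ (x s) := by simp [hq1_def, hxe_eq s h0s]
      rw [hq1s]
      calc φ (x s) ≤ 2 * k * x s ^ h := hφle
        _ ≤ 2 * k * (x t₁ ^ h * Real.exp (-r * (s - t₁))) := by
            rw [← heq]; nlinarith
        _ = C * Real.exp (-r * (s - t₁)) := by rw [hC_def]; ring
    set J : ℝ → ℝ := fun t => I t + (C / r) * Real.exp (-r * (t - t₁)) with hJ_def
    have hJderiv : ∀ t, HasDerivAt J (q1 t + (C / r) * (Real.exp (-r * (t - t₁)) * (-r * 1))) t := by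
      intro t
      exact (hI_deriv t).add
        (((((hasDerivAt_id t).sub_const t₁).const_mul (-r)).exp).const_mul (C / r))
    have hJanti : AntitoneOn J (Ici t₁) := by
      apply antitoneOn_of_deriv_nonpos (convex_Ici t₁)
      · exact fun s _ => (hJderiv s).continuousAt.continuousWithinAt
      · exact fun s _ => (hJderiv s).differentiableAt.differentiableWithinAt
      · intro s hs
        rw [interior_Ici] at hs
        rw [(hJderiv s).deriv]
        have l1 := hq1_bound s hs.le
        have l2 : (C / r) * (Real.exp (-r * (s - t₁)) * (-r * 1))
            = -(C * Real.exp (-r * (s - t₁))) := by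
          have hrne : r ≠ 0 := ne_of_gt hrpos
          field_simp
        rw [l2]
        linarith
    have hJbound : ∀ t, t₁ ≤ t → I t ≤ J t₁ := by
      intro t ht
      calc I t ≤ J t := le_add_of_nonneg_right (by positivity)
        _ ≤ J t₁ := hJanti self_mem_Ici ht ht
    obtain ⟨T, hT⟩ := hub (max (J t₁) (I t₁))
    rcases le_total T t₁ with hTle | hTle
    · have := hI_mono hTle
      have := le_max_right (J t₁) (I t₁)
      linarith
    · have := hJbound T hTle
      have := le_max_left (J t₁) (I t₁)
      linarith
  obtain ⟨B, hB⟩ := hIbdd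
  have hbdd : BddAbove (Set.range I) := ⟨B, by rintro _ ⟨t, rfl⟩; exact hB t⟩
  set L : ℝ := ⨆ t, I t with hL_def
  have hIL : ∀ t, I t ≤ L := fun t => le_ciSup hbdd t
  have hItend : Tendsto I atTop (nhds L) := tendsto_atTop_ciSup hI_mono hbdd
  have hL0 : 0 ≤ L := hI0 ▸ hIL 0
  set G : ℝ := g 0 * Real.exp L with hG_def
  have hGpos : 0 < G := by positivity
  have hgle : ∀ t : ℝ, 0 ≤ t → g t ≤ G := fun t ht => by
    rw [hg_exp t ht, hG_def]
    have := Real.exp_le_exp.mpr (hIL t)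
    nlinarith
  have hg_tendsto : Tendsto g atTop (nhds G) := by
    have l1 : Tendsto (fun t => g 0 * Real.exp (I t)) atTop (nhds G) := by
      exact ((Real.continuous_exp.tendsto L).comp hItend).const_mul (g 0)
    apply l1.congr'
    filter_upwards [eventually_ge_atTop (0:ℝ)] with t ht
    exact (hg_exp t ht).symm
  -- x tends to 0 (Barbalat)
  have hx_tendsto : Tendsto x atTop (nhds 0) := by
    set dx : ℝ → ℝ := fun t =>
      x t * (1 - x t) * ((a + d - b - c) * x t + (b - d) - g t * (1 - x t)) with hdx_def
    set M : ℝ := |a + d - b - c| + |b - d| + G + 1 with hM_def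
    have hMpos : 0 < M := by positivity
    have tri : ∀ u v : ℝ, |u - v| ≤ |u| + |v| := fun u v => by
      rw [sub_eq_add_neg]
      exact (abs_add_le u (-v)).trans (by rw [abs_neg])
    have hx'le : ∀ t : ℝ, 0 ≤ t → |dx t| ≤ M := by
      intro t ht
      have l1 := hxpos t ht
      have l2 := hxlt1 t ht
      have l3 : 0 < g t := by rw [hg_exp t ht]; positivity
      have l4 := hgle t ht
      have e1 : |dx t| ≤ |(a + d - b - c) * x t + (b - d) - g t * (1 - x t)| := by
        rw [hdx_def]
        simp only []
        rw [abs_mul, abs_mul, abs_of_pos l1, abs_of_pos (by linarith : (0:ℝ) < 1 - x t)]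
        nlinarith [mul_nonneg (abs_nonneg ((a + d - b - c) * x t + (b - d) - g t * (1 - x t)))
          (by nlinarith : (0:ℝ) ≤ 1 - x t * (1 - x t))]
      have e2 : |(a + d - b - c) * x t + (b - d) - g t * (1 - x t)| ≤ M := by
        calc |(a + d - b - c) * x t + (b - d) - g t * (1 - x t)|
            ≤ |(a + d - b - c) * x t + (b - d)| + |g t * (1 - x t)| := tri _ _
          _ ≤ (|(a + d - b - c) * x t| + |b - d|) + |g t * (1 - x t)| := by
              linarith [abs_add_le ((a + d - b - c) * x t) (b - d)]
          _ ≤ M := by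
              rw [abs_mul, abs_mul, abs_of_pos l1, abs_of_pos l3,
                abs_of_pos (by linarith : (0:ℝ) < 1 - x t)]
              have := abs_nonneg (a + d - b - c)
              rw [hM_def]
              nlinarith
      exact e1.trans e2
    have hlip : ∀ t₁ t₂ : ℝ, 0 ≤ t₁ → t₁ ≤ t₂ → |x t₂ - x t₁| ≤ M * (t₂ - t₁) := by
      intro t₁ t₂ hl1 hl2
      have key := Convex.norm_image_sub_le_of_norm_hasDerivWithin_le
        (f := x) (f' := dx) (s := Icc t₁ t₂)
        (fun s hs => ((hsol s (le_trans hl1 hs.1)).1).hasDerivWithinAt)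
        (fun s hs => by
          rw [Real.norm_eq_abs]
          exact hx'le s (le_trans hl1 hs.1))
        (convex_Icc t₁ t₂) (left_mem_Icc.mpr hl2) (right_mem_Icc.mpr hl2)
      rw [Real.norm_eq_abs, Real.norm_eq_abs, abs_of_nonneg (by linarith : (0:ℝ) ≤ t₂ - t₁)] at key
      exact key
    by_contra hnot
    rw [Metric.tendsto_atTop] at hnot
    push_neg at hnot
    obtain ⟨ε, hε, hfreq⟩ := hnot
    set ε₁ : ℝ := min ε 1 with hε₁_def
    have hε₁pos : 0 < ε₁ := lt_min hε one_pos
    have hε₁le : ε₁ ≤ 1 := min_le_right _ _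
    have hfreq' : ∀ N : ℝ, ∃ t, max N 0 ≤ t ∧ ε₁ ≤ x t := by
      intro N
      obtain ⟨t, htN, htd⟩ := hfreq (max N 0)
      have h0t : 0 ≤ t := le_trans (le_max_right N 0) htN
      refine ⟨t, htN, ?_⟩
      rw [Real.dist_eq, sub_zero, abs_of_pos (hxpos t h0t)] at htd
      exact le_trans (min_le_left ε 1) htd
    obtain ⟨y₀, hy₀mem, hy₀min⟩ := isCompact_Icc.exists_isMinOn (s := Icc (ε₁/2) 1)
      (Set.nonempty_Icc.mpr (by linarith)) hφc.continuousOn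
    set δ' : ℝ := φ y₀ with hδ'_def
    have hδ'pos : 0 < δ' := h1 y₀ (by linarith [hy₀mem.1]) hy₀mem.2
    set τ : ℝ := ε₁ / (2 * M) with hτ_def
    have hτpos : 0 < τ := by positivity
    have hMτ : M * τ = ε₁ / 2 := by
      rw [hτ_def]
      field_simp
    have claim : ∀ n : ℕ, ∃ t : ℝ, 0 ≤ t ∧ (n : ℝ) * (δ' * τ) ≤ I t := by
      intro n
      induction n with
      | zero => exact ⟨0, le_rfl, by simp [hI0]⟩
      | succ n ih =>
        obtain ⟨t, ht0, htI⟩ := ih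
        obtain ⟨t', ht'ge, ht'x⟩ := hfreq' t
        have h0t' : 0 ≤ t' := le_trans (le_max_right t 0) ht'ge
        have htt' : t ≤ t' := le_trans (le_max_left t 0) ht'ge
        have hq1_lb : ∀ s, s ∈ Icc t' (t' + τ) → δ' ≤ q1 s := by
          intro s hs
          have h0s : 0 ≤ s := le_trans h0t' hs.1
          have hl := hlip t' s h0t' hs.1
          have hstτ : M * (s - t') ≤ M * τ := by nlinarith [hs.2]
          have hge2 : ε₁ / 2 ≤ x s := by
            have h5 := (abs_le.mp hl).1
            nlinarith [h5, hstτ, hMτ, ht'x]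
          have hle1 : x s ≤ 1 := (hxlt1 s h0s).le
          have hqeq : q1 s = φ (x s) := by simp [hq1_def, hxe_eq s h0s]
          rw [hqeq]
          exact hy₀min ⟨hge2, hle1⟩
        have hIle' : I t ≤ I t' := hI_mono htt'
        have hIstep : I t' + δ' * τ ≤ I (t' + τ) := by
          have hadd : I t' + (∫ u in t'..(t' + τ), q1 u) = I (t' + τ) :=
            intervalIntegral.integral_add_adjacent_intervals
              (hq1c.intervalIntegrable _ _) (hq1c.intervalIntegrable _ _)
          have hge : δ' * τ ≤ ∫ u in t'..(t' + τ), q1 u := by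
            have hmono := intervalIntegral.integral_mono_on (by linarith : t' ≤ t' + τ)
              (_root_.intervalIntegrable_const (μ := MeasureTheory.volume) (c := δ'))
              (hq1c.intervalIntegrable _ _) (fun u hu => hq1_lb u hu)
            rw [intervalIntegral.integral_const, smul_eq_mul] at hmono
            calc δ' * τ = (t' + τ - t') * δ' := by ring
              _ ≤ _ := hmono
          linarith
        refine ⟨t' + τ, by linarith, ?_⟩
        push_cast
        nlinarith
    obtain ⟨n, hn⟩ := exists_nat_gt (L / (δ' * τ))
    obtain ⟨t, _, htI⟩ := claim n
    have hLlt : L < (n : ℝ) * (δ' * τ) := by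
      rw [div_lt_iff₀ (by positivity)] at hn
      linarith
    linarith [hIL t]
  exact ⟨hx_tendsto, G, hGpos, hg_tendsto⟩
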